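/- arXiv:2508.11795 — 2 statements merged into one kernel-verified Lean document; each statement's English description precedes it below -/
import Mathlib

section
/- Let H : ℝ → 𝕊^p be a differentiable symmetric-matrix-valued function of time, and suppose there is a constant c > 0 such that H'(t) ⪰ -c H(t) for all t ≥ 0. If H(0) ⪰ 0, then H(t) ⪰ 0 for all t ≥ 0. -/
open Matrix

/-- Forward invariance of the PSD cone under the exponential matrix barrier condition:
if `H'(t) ⪰ -c H(t)` for all `t ≥ 0` and `H(0) ⪰ 0`, then `H(t) ⪰ 0` for all `t ≥ 0`. -/
theorem psd_forward_invariance {p : ℕ} (H H' : ℝ → Matrix (Fin p) (Fin p) ℝ)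
    (hsymm : ∀ t, (H t).IsSymm)
    (hderiv : ∀ t, ∀ i j, HasDerivAt (fun s => H s i j) (H' t i j) t)
    (c : ℝ) (hc : 0 < c)
    (hbarrier : ∀ t, 0 ≤ t → (H' t + c • H t).PosSemidef)
    (h0 : (H 0).PosSemidef) :
    ∀ t, 0 ≤ t → (H t).PosSemidef := by
  intro t ht
  refine Matrix.PosSemidef.of_dotProduct_mulVec_nonneg (by simpa [Matrix.IsHermitian, Matrix.conjTranspose_eq_transpose_of_trivial] using (hsymm t).eq) ?_
  intro x
  -- quadratic form and its derivative
  have hq : ∀ s : ℝ, HasDerivAt (fun u => x ⬝ᵥ (H u *ᵥ x)) (x ⬝ᵥ (H' s *ᵥ x)) s := by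
    intro s
    simp only [dotProduct, mulVec]
    exact HasDerivAt.fun_sum fun i _ =>
      ((HasDerivAt.fun_sum fun j _ => (hderiv s i j).mul_const (x j)).const_mul (x i))
  -- g s = exp (c*s) * q s
  set g : ℝ → ℝ := fun s => Real.exp (c * s) * (x ⬝ᵥ (H s *ᵥ x)) with hg
  have hgd : ∀ s : ℝ, HasDerivAt g
      (Real.exp (c * s) * (c * (x ⬝ᵥ (H s *ᵥ x)) + x ⬝ᵥ (H' s *ᵥ x))) s := by
    intro s
    have he : HasDerivAt (fun u : ℝ => Real.exp (c * u)) (c * Real.exp (c * s)) s := by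
      simpa [mul_comm] using ((hasDerivAt_id s).const_mul c).exp
    have := he.fun_mul (hq s)
    exact this.congr_deriv (by ring)
  have hmono : MonotoneOn g (Set.Ici (0:ℝ)) := by
    apply monotoneOn_of_deriv_nonneg (convex_Ici 0)
    · exact fun s _ => (hgd s).differentiableAt.continuousAt.continuousWithinAt
    · intro s _
      exact (hgd s).differentiableAt.differentiableWithinAt
    · intro s hs
      rw [interior_Ici] at hs
      rw [(hgd s).deriv]
      have hb := (hbarrier s (le_of_lt hs)).dotProduct_mulVec_nonneg x
      simp only [star_trivial, add_mulVec, dotProduct_add, smul_mulVec,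
        dotProduct_smul, smul_eq_mul] at hb
      have : 0 ≤ c * (x ⬝ᵥ (H s *ᵥ x)) + x ⬝ᵥ (H' s *ᵥ x) := by linarith
      positivity
  have h0' : (0:ℝ) ≤ g 0 := by
    have := h0.dotProduct_mulVec_nonneg x
    simp only [star_trivial] at this
    simpa [hg] using this
  have hle : g 0 ≤ g t := hmono (by simp) ht ht
  have : (0:ℝ) ≤ Real.exp (c * t) * (x ⬝ᵥ (H t *ᵥ x)) := le_trans h0' hle
  have hx : (0:ℝ) ≤ x ⬝ᵥ (H t *ᵥ x) := by nlinarith [Real.exp_pos (c * t)]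
  simpa using hx
end

section
/- For x ∈ ℝⁿ with ‖x − x₀‖² ≤ R² and c > 0, the matrix inequality [[0_{n×n}, w], [wᵀ, 0]] ⪰ -c [[I_n, x − x₀], [(x − x₀)ᵀ, R²]] (with w ∈ ℝⁿ) holds if and only if c R² − (1/c)‖w + c(x − x₀)‖² ≥ 0. -/
open Matrix

lemma unit_posSemidef_iff (M : Matrix Unit Unit ℝ) :
    M.PosSemidef ↔ 0 ≤ M () () := by
  constructor
  · intro h
    have := (posSemidef_iff_dotProduct_mulVec.mp h).2 (fun _ => 1)
    simpa [dotProduct, mulVec] using this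
  · intro h
    refine posSemidef_iff_dotProduct_mulVec.mpr ⟨?_, fun y => ?_⟩
    · ext i j; simp [conjTranspose]
    · have e : dotProduct (star y) (M *ᵥ y) = y () * y () * M () () := by
        simp [dotProduct, mulVec]; ring
      rw [e]
      exact mul_nonneg (mul_self_nonneg (y ())) h

/-- The exponential matrix CBF condition for the Schur-complement representation of a sphere:
`[[0, w], [wᵀ, 0]] ⪰ -c [[I, x - x₀], [(x - x₀)ᵀ, R²]]` iff
`c R² - (1/c) ‖w + c (x - x₀)‖² ≥ 0`. -/
theorem sphere_mcbf_condition {n : ℕ} (x x₀ w : Fin n → ℝ) (R c : ℝ) (hc : 0 < c)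
    (hx : (x - x₀) ⬝ᵥ (x - x₀) ≤ R ^ 2) :
    ((Matrix.fromBlocks (0 : Matrix (Fin n) (Fin n) ℝ)
        (Matrix.of fun i (_ : Unit) => w i)
        (Matrix.of fun (_ : Unit) j => w j)
        (Matrix.of fun (_ : Unit) (_ : Unit) => (0 : ℝ)))
      + c • (Matrix.fromBlocks (1 : Matrix (Fin n) (Fin n) ℝ)
        (Matrix.of fun i (_ : Unit) => (x - x₀) i)
        (Matrix.of fun (_ : Unit) j => (x - x₀) j)
        (Matrix.of fun (_ : Unit) (_ : Unit) => R ^ 2))).PosSemidef ↔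
    0 ≤ c * R ^ 2 - (1 / c) * ((w + c • (x - x₀)) ⬝ᵥ (w + c • (x - x₀))) := by
  set v : Fin n → ℝ := w + c • (x - x₀) with hv
  set A : Matrix (Fin n) (Fin n) ℝ := c • 1 with hA
  set B : Matrix (Fin n) Unit ℝ := Matrix.of fun i (_ : Unit) => v i with hB
  have hAdef : A.PosDef := by
    refine posDef_iff_dotProduct_mulVec.mpr ⟨?_, ?_⟩
    · ext i j; simp [hA, conjTranspose, Matrix.one_apply, mul_comm]
    · intro y hy
      have hAy : A *ᵥ y = c • y := by
        rw [hA, Matrix.smul_mulVec, Matrix.one_mulVec]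
      have e : star y ⬝ᵥ A *ᵥ y = c * (y ⬝ᵥ y) := by
        rw [hAy, dotProduct_smul]
        simp [dotProduct]
      rw [e]
      exact mul_pos hc (lt_of_le_of_ne (Finset.sum_nonneg fun i _ => mul_self_nonneg _)
        (by intro h; exact hy (funext fun i => by
          have := (Finset.sum_eq_zero_iff_of_nonneg
            (fun i _ => mul_self_nonneg (y i))).mp h.symm i (Finset.mem_univ i)
          exact (mul_self_eq_zero).mp this)))
  have hAinv : Invertible A := by
    refine ⟨c⁻¹ • 1, ?_, ?_⟩
    · rw [hA, smul_mul_assoc, Matrix.mul_smul, Matrix.one_mul, smul_smul,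
        inv_mul_cancel₀ hc.ne', one_smul]
    · rw [hA, smul_mul_assoc, Matrix.mul_smul, Matrix.one_mul, smul_smul,
        mul_inv_cancel₀ hc.ne', one_smul]
  have hAinvEq : A⁻¹ = c⁻¹ • 1 := by
    rw [← invOf_eq_nonsing_inv A]
    refine invOf_eq_right_inv ?_
    rw [hA, smul_mul_assoc, Matrix.mul_smul, Matrix.one_mul, smul_smul,
      mul_inv_cancel₀ hc.ne', one_smul]
  have key : (Matrix.fromBlocks (0 : Matrix (Fin n) (Fin n) ℝ)
        (Matrix.of fun i (_ : Unit) => w i)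
        (Matrix.of fun (_ : Unit) j => w j)
        (Matrix.of fun (_ : Unit) (_ : Unit) => (0 : ℝ)))
      + c • (Matrix.fromBlocks (1 : Matrix (Fin n) (Fin n) ℝ)
        (Matrix.of fun i (_ : Unit) => (x - x₀) i)
        (Matrix.of fun (_ : Unit) j => (x - x₀) j)
        (Matrix.of fun (_ : Unit) (_ : Unit) => R ^ 2))
      = Matrix.fromBlocks A B Bᴴ
        (Matrix.of fun (_ : Unit) (_ : Unit) => c * R ^ 2) := by
    have hBH : Bᴴ = Matrix.of fun (_ : Unit) j => v j := by
      ext i j; simp [hB, Matrix.conjTranspose_apply]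
    rw [Matrix.fromBlocks_smul, Matrix.fromBlocks_add, hBH]
    ext i j
    rcases i with i | i <;> rcases j with j | j <;>
      simp [hA, hB, hv, Pi.add_apply, Pi.smul_apply, Pi.sub_apply, smul_eq_mul]
  rw [key, PosDef.fromBlocks₁₁ _ _ hAdef, unit_posSemidef_iff]
  have : (Matrix.of (fun (_ : Unit) (_ : Unit) => c * R ^ 2) - Bᴴ * A⁻¹ * B) () ()
      = c * R ^ 2 - (1 / c) * (v ⬝ᵥ v) := by
    rw [hAinvEq]
    simp [hB, Matrix.mul_apply, dotProduct, Matrix.one_apply, Finset.mul_sum, mul_comm,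
      mul_left_comm, one_div, conjTranspose]
  rw [this]
end
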